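/- Let f : ℝ_{>0} → ℝ_{>0} be an increasing function with ∑_{k=1}^∞ 1/f(k) < ∞ which grows at most polynomially (there exist k > 0 and x₀ > 0 with f(x) ≤ x^k for all x ≥ x₀), and let φ : ℝ_{>0} → ℝ_{>0} be a decreasing function satisfying φ(Q) ≤ Q^{−1} (f(log Q))^{−1/m} for all Q > 0. Then for almost every m×n real matrix B there exists Q₀ > 0 such that for every Q ≥ Q₀ there exists N₀ (depending on Q) such that for every integer N ≥ N₀ there is a residue class c ∈ ℤ^d modulo N containing no pair (n, m) ∈ ℤ^n × ℤ^m with ‖Bn − m‖_∞^m < N^m φ(Q) and ‖n‖_∞^n < (N/2)^n Q. -/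

import Mathlib

open MeasureTheory
open scoped ENNReal

/-- Matrix-vector multiplication, with the matrix given as `Fin m → Fin n → ℝ`. -/
def matVec {m n : ℕ} (B : Fin m → Fin n → ℝ) (x : Fin n → ℝ) : Fin m → ℝ :=
  fun i => ∑ j, B i j * x j

theorem diophantine_congruence_unsolvable (m n : ℕ) (hm : 1 ≤ m) (hn : 1 ≤ n)
    (f : ℝ → ℝ) (hfpos : ∀ x > (0 : ℝ), 0 < f x) (hfmono : MonotoneOn f (Set.Ioi 0))
    (hfsum : Summable fun k : ℕ => 1 / f (k + 1))
    (hfpoly : ∃ k > (0 : ℝ), ∃ x₀ > (0 : ℝ), ∀ x ≥ x₀, f x ≤ x ^ k)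
    (φ : ℝ → ℝ) (hφpos : ∀ Q > (0 : ℝ), 0 < φ Q) (hφanti : AntitoneOn φ (Set.Ioi 0))
    (hφf : ∀ Q > (1 : ℝ), φ Q ≤ Q⁻¹ * f (Real.log Q) ^ (-(m : ℝ)⁻¹)) :
    ∀ᵐ B : Fin m → Fin n → ℝ ∂volume, ∃ Q₀ > (0 : ℝ), ∀ Q ≥ Q₀,
      ∃ N₀ : ℕ, 0 < N₀ ∧ ∀ N : ℕ, N₀ ≤ N →
        ∃ c₁ : Fin n → ℤ, ∃ c₂ : Fin m → ℤ,
          ∀ a : Fin n → ℤ, ∀ b : Fin m → ℤ,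
            (∀ j, (N : ℤ) ∣ (a j - c₁ j)) → (∀ i, (N : ℤ) ∣ (b i - c₂ i)) →
            ¬(‖(fun i => matVec B (fun j => (a j : ℝ)) i - (b i : ℝ))‖ ^ m < (N : ℝ) ^ m * φ Q ∧
              ‖(fun j => (a j : ℝ))‖ ^ n < ((N : ℝ) / 2) ^ n * Q) := by
  classical
  have hm0 : (m : ℝ) ≠ 0 := by positivity
  have hn0 : (n : ℝ) ≠ 0 := by positivity
  set D : ℝ := (3/2) ^ n * 3 ^ m with hD
  have hDpos : 0 < D := by positivity
  -- find K with D^m < f (K+1)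
  obtain ⟨K, hK⟩ : ∃ K : ℕ, D ^ m < f ((K : ℝ) + 1) := by
    have h0 : Filter.Tendsto (fun k : ℕ => 1 / f ((k : ℝ) + 1)) Filter.atTop (nhds 0) :=
      hfsum.tendsto_atTop_zero
    have hpos : 0 < 1 / D ^ m := by positivity
    obtain ⟨K, hK⟩ := (h0.eventually (gt_mem_nhds hpos)).exists
    refine ⟨K, ?_⟩
    have hf : 0 < f ((K : ℝ) + 1) := hfpos _ (by positivity)
    rw [div_lt_div_iff₀ hf (by positivity)] at hK
    nlinarith
  refine MeasureTheory.ae_of_all _ fun B => ?_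
  refine ⟨max 2 (Real.exp ((K : ℝ) + 2)), by positivity, fun Q hQ => ?_⟩
  have hQ2 : (2 : ℝ) ≤ Q := le_trans (le_max_left _ _) hQ
  have hQ0 : (0 : ℝ) < Q := by linarith
  have hQ1 : (1 : ℝ) < Q := by linarith
  have hφQ : 0 < φ Q := hφpos Q hQ0
  have hlog2 : (K : ℝ) + 2 ≤ Real.log Q :=
    (Real.le_log_iff_exp_le hQ0).mpr (le_trans (le_max_right _ _) hQ)
  have hK0 : (0 : ℝ) ≤ K := Nat.cast_nonneg K
  have hlogpos : 0 < Real.log Q := by linarith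
  have hflog : D ^ m < f (Real.log Q) :=
    lt_of_lt_of_le hK (hfmono (Set.mem_Ioi.mpr (by linarith)) (Set.mem_Ioi.mpr hlogpos)
      (by linarith))
  have hfl0 : 0 < f (Real.log Q) := hfpos _ hlogpos
  -- key estimate : D * (Q * φ Q) < 1
  have hkey : D * (Q * φ Q) < 1 := by
    have h1 : Q * φ Q ≤ f (Real.log Q) ^ (-(m : ℝ)⁻¹) := by
      have h2 := hφf Q hQ1
      calc Q * φ Q ≤ Q * (Q⁻¹ * f (Real.log Q) ^ (-(m : ℝ)⁻¹)) :=
            mul_le_mul_of_nonneg_left h2 hQ0.le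
        _ = f (Real.log Q) ^ (-(m : ℝ)⁻¹) := by field_simp
    have h2 : f (Real.log Q) ^ (-(m : ℝ)⁻¹) < D⁻¹ := by
      have h3 : D < f (Real.log Q) ^ ((m : ℝ)⁻¹) := by
        have h4 : (D ^ m : ℝ) ^ ((m : ℝ)⁻¹) < f (Real.log Q) ^ ((m : ℝ)⁻¹) :=
          Real.rpow_lt_rpow (by positivity) hflog (by positivity)
        rwa [← Real.rpow_natCast D m, ← Real.rpow_mul hDpos.le, mul_inv_cancel₀ hm0,
          Real.rpow_one] at h4
      rw [Real.rpow_neg hfl0.le]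
      exact inv_strictAnti₀ hDpos h3
    calc D * (Q * φ Q) ≤ D * f (Real.log Q) ^ (-(m : ℝ)⁻¹) :=
          mul_le_mul_of_nonneg_left h1 hDpos.le
      _ < D * D⁻¹ := mul_lt_mul_of_pos_left h2 hDpos
      _ = 1 := mul_inv_cancel₀ hDpos.ne'
  -- set up ε, ρ
  set ε : ℝ := φ Q ^ ((m : ℝ)⁻¹) with hε
  have hε0 : 0 < ε := Real.rpow_pos_of_pos hφQ _
  have hεm : ε ^ m = φ Q := by
    rw [hε, ← Real.rpow_natCast _ m, ← Real.rpow_mul hφQ.le, inv_mul_cancel₀ hm0, Real.rpow_one]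
  set ρ : ℝ := Q ^ ((n : ℝ)⁻¹) with hρ
  have hρ1 : 1 ≤ ρ := Real.one_le_rpow (by linarith) (by positivity)
  have hρn : ρ ^ n = Q := by
    rw [hρ, ← Real.rpow_natCast _ n, ← Real.rpow_mul hQ0.le, inv_mul_cancel₀ hn0, Real.rpow_one]
  refine ⟨max 6 (⌈2/ε⌉₊ + 1), lt_of_lt_of_le (by norm_num) (le_max_left _ _), fun N hN => ?_⟩
  have hN6 : 6 ≤ N := le_trans (le_max_left _ _) hN
  have hN0 : 0 < N := by omega
  haveI : NeZero N := ⟨by omega⟩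
  have hN6R : (6 : ℝ) ≤ (N : ℝ) := by exact_mod_cast hN6
  have hNε : 2 ≤ (N : ℝ) * ε := by
    have h1 : (⌈2/ε⌉₊ : ℝ) ≤ (N : ℝ) := by
      exact_mod_cast le_trans (le_trans (Nat.le_succ _) (le_max_right 6 _)) hN
    have h2 : 2 / ε ≤ (N : ℝ) := le_trans (Nat.le_ceil _) h1
    rwa [div_le_iff₀ hε0] at h2
  have hNR : (3 : ℝ) ≤ (N : ℝ) / 2 * ρ := by nlinarith
  set A : ℤ := ⌈(N : ℝ) / 2 * ρ⌉ with hA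
  set Kb : ℤ := ⌈2 * ((N : ℝ) * ε)⌉ with hKb
  have hA0 : (0 : ℤ) ≤ A := Int.ceil_nonneg (by positivity)
  have hKb0 : (0 : ℤ) ≤ Kb := Int.ceil_nonneg (by positivity)
  set T : Finset ((Fin n → ℤ) × (Fin m → ℤ)) :=
    (Finset.Icc (fun _ => -A) (fun _ => A)) ×ˢ (Finset.Icc 0 (fun _ => Kb)) with hT
  set g : (Fin n → ℤ) × (Fin m → ℤ) → (Fin n → ZMod N) × (Fin m → ZMod N) :=
    fun p => (fun j => ((p.1 j : ℤ) : ZMod N),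
      fun i => ((p.2 i + ⌈matVec B (fun j => (p.1 j : ℝ)) i - (N : ℝ) * ε⌉ : ℤ) : ZMod N))
    with hg
  -- cardinality bounds
  have hIccA : ((Finset.Icc (-A) A).card : ℝ) ≤ 3 * ((N : ℝ) / 2 * ρ) := by
    rw [Int.card_Icc]
    have h0 : (0 : ℤ) ≤ A + 1 - -A := by omega
    have hAle : (A : ℝ) ≤ (N : ℝ) / 2 * ρ + 1 := le_of_lt (Int.ceil_lt_add_one _)
    have e : (((A + 1 - -A).toNat : ℕ) : ℝ) = 2 * (A : ℝ) + 1 := by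
      rw_mod_cast [Int.toNat_of_nonneg h0]; push_cast; ring
    rw [e]; linarith
  have hIccK : ((Finset.Icc (0 : ℤ) Kb).card : ℝ) ≤ 3 * ((N : ℝ) * ε) := by
    rw [Int.card_Icc]
    have h0 : (0 : ℤ) ≤ Kb + 1 - 0 := by omega
    have hKle : (Kb : ℝ) ≤ 2 * ((N : ℝ) * ε) + 1 := le_of_lt (Int.ceil_lt_add_one _)
    have e : (((Kb + 1 - 0).toNat : ℕ) : ℝ) = (Kb : ℝ) + 1 := by
      rw_mod_cast [Int.toNat_of_nonneg h0]; push_cast; ring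
    rw [e]; linarith
  have hTcard : (T.card : ℝ) < (N : ℝ) ^ (n + m) := by
    have e1 : T.card = (Finset.Icc (-A) A).card ^ n * (Finset.Icc (0 : ℤ) Kb).card ^ m := by
      rw [hT, Finset.card_product, Pi.card_Icc, Pi.card_Icc]
      simp [Finset.prod_const]
    calc (T.card : ℝ)
        = ((Finset.Icc (-A) A).card : ℝ) ^ n * ((Finset.Icc (0 : ℤ) Kb).card : ℝ) ^ m := by
          rw [e1]; push_cast; ring
      _ ≤ (3 * ((N : ℝ) / 2 * ρ)) ^ n * (3 * ((N : ℝ) * ε)) ^ m := by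
          gcongr <;> positivity
      _ = ((3/2) ^ n * (N : ℝ) ^ n * ρ ^ n) * (3 ^ m * (N : ℝ) ^ m * ε ^ m) := by ring
      _ = D * (Q * φ Q) * (N : ℝ) ^ (n + m) := by rw [hρn, hεm, hD]; ring
      _ < 1 * (N : ℝ) ^ (n + m) := by
          exact mul_lt_mul_of_pos_right hkey (by positivity)
      _ = (N : ℝ) ^ (n + m) := one_mul _
  -- pigeonhole
  have hcardTarget : Fintype.card ((Fin n → ZMod N) × (Fin m → ZMod N)) = N ^ (n + m) := by
    simp [Fintype.card_prod, Fintype.card_fun, ZMod.card, pow_add]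
  obtain ⟨c, hc⟩ : ∃ c, c ∉ T.image g := by
    by_contra hcon
    push_neg at hcon
    have hEq : T.image g = Finset.univ := Finset.eq_univ_iff_forall.mpr hcon
    have h1 : (T.image g).card ≤ T.card := Finset.card_image_le
    have h2 : T.card < N ^ (n + m) := by exact_mod_cast hTcard
    rw [hEq, Finset.card_univ, hcardTarget] at h1
    omega
  refine ⟨fun j => ((c.1 j).val : ℤ), fun i => ((c.2 i).val : ℤ), fun a b hda hdb => ?_⟩
  rintro ⟨h1, h2⟩
  -- coordinatewise bounds
  have hBa : ∀ i, |matVec B (fun j => (a j : ℝ)) i - (b i : ℝ)| < (N : ℝ) * ε := by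
    intro i
    have hlt : ‖(fun i => matVec B (fun j => (a j : ℝ)) i - (b i : ℝ))‖ ^ m
        < ((N : ℝ) * ε) ^ m := by rw [mul_pow, hεm]; exact h1
    have hnorm := lt_of_pow_lt_pow_left₀ m (by positivity) hlt
    calc |matVec B (fun j => (a j : ℝ)) i - (b i : ℝ)|
        ≤ ‖(fun i => matVec B (fun j => (a j : ℝ)) i - (b i : ℝ))‖ := by
          rw [← Real.norm_eq_abs]
          exact norm_le_pi_norm (G := fun _ : Fin m => ℝ)
            (fun i => matVec B (fun j => (a j : ℝ)) i - (b i : ℝ)) i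
      _ < (N : ℝ) * ε := hnorm
  have ha : ∀ j, |(a j : ℝ)| < (N : ℝ) / 2 * ρ := by
    intro j
    have hlt : ‖(fun j => (a j : ℝ))‖ ^ n < ((N : ℝ) / 2 * ρ) ^ n := by
      rw [mul_pow, hρn]; exact h2
    have hnorm := lt_of_pow_lt_pow_left₀ n (by positivity) hlt
    calc |(a j : ℝ)|
        ≤ ‖(fun j => (a j : ℝ))‖ := by
          rw [← Real.norm_eq_abs]
          exact norm_le_pi_norm (G := fun _ : Fin n => ℝ) (fun j => (a j : ℝ)) j
      _ < (N : ℝ) / 2 * ρ := hnorm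
  set o : Fin m → ℤ := fun i => b i - ⌈matVec B (fun j => (a j : ℝ)) i - (N : ℝ) * ε⌉ with ho
  have hmem : (a, o) ∈ T := by
    rw [hT, Finset.mem_product]
    constructor
    · rw [Finset.mem_Icc]
      constructor
      · intro j
        have h3 := (abs_lt.mp (ha j)).1
        have h4 : -(A : ℝ) ≤ (a j : ℝ) := by
          have := Int.le_ceil ((N : ℝ) / 2 * ρ)
          simp only [← hA] at this
          linarith
        exact_mod_cast h4
      · intro j
        have h3 := (abs_lt.mp (ha j)).2
        have h4 : (a j : ℝ) ≤ (A : ℝ) := by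
          have := Int.le_ceil ((N : ℝ) / 2 * ρ)
          simp only [← hA] at this
          linarith
        exact_mod_cast h4
    · rw [Finset.mem_Icc]
      constructor
      · intro i
        have h3 := (abs_lt.mp (hBa i)).2
        have h5 : matVec B (fun j => (a j : ℝ)) i - (N : ℝ) * ε ≤ (b i : ℝ) := by linarith
        have h6 : ⌈matVec B (fun j => (a j : ℝ)) i - (N : ℝ) * ε⌉ ≤ b i := Int.ceil_le.mpr h5
        simp only [ho, Pi.zero_apply]
        omega
      · intro i
        have h3 := (abs_lt.mp (hBa i)).1
        have h6 := Int.le_ceil (matVec B (fun j => (a j : ℝ)) i - (N : ℝ) * ε)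
        have h7 := Int.le_ceil (2 * ((N : ℝ) * ε))
        have h8 : ((o i : ℤ) : ℝ) ≤ ((Kb : ℤ) : ℝ) := by
          simp only [ho]
          push_cast
          simp only [← hKb] at h7
          linarith
        exact_mod_cast h8
  have himg : g (a, o) = c := by
    have e2 : ∀ i, (o i + ⌈matVec B (fun j => (a j : ℝ)) i - (N : ℝ) * ε⌉ : ℤ) = b i := by
      intro i; simp [ho]
    refine Prod.ext ?_ ?_
    · funext j
      show ((a j : ℤ) : ZMod N) = c.1 j
      have h3 : ((a j : ℤ) : ZMod N) = (((c.1 j).val : ℤ) : ZMod N) :=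
        (ZMod.intCast_eq_intCast_iff _ _ _).mpr ((Int.modEq_iff_dvd.mpr (hda j)).symm)
      rw [h3]; push_cast; simp [ZMod.natCast_val, ZMod.cast_id]
    · funext i
      show ((o i + ⌈matVec B (fun j => (a j : ℝ)) i - (N : ℝ) * ε⌉ : ℤ) : ZMod N) = c.2 i
      rw [e2 i]
      have h3 : ((b i : ℤ) : ZMod N) = (((c.2 i).val : ℤ) : ZMod N) :=
        (ZMod.intCast_eq_intCast_iff _ _ _).mpr ((Int.modEq_iff_dvd.mpr (hdb i)).symm)
      rw [h3]; push_cast; simp [ZMod.natCast_val, ZMod.cast_id]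
  exact hc (Finset.mem_image.mpr ⟨(a, o), hmem, himg⟩)
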